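/- For every n ≥ 1 there exist polynomials p_n and q_n with integer coefficients such that the n-th derivative of the plasma dispersion function satisfies Z^{(n)}(ζ) = p_n(ζ) + q_n(ζ) Z(ζ) on ℂ \ ℝ, and moreover q_n(ζ) = (-1)^n H_n(ζ), where H_n is the n-th probabilists' Hermite polynomial. -/

import Mathlib

open MeasureTheory Filter

/-- The plasma dispersion function `Z(ζ) = (1/√(2π)) ∫_ℝ e^{-v²/2}/(v-ζ) dv`. -/
noncomputable def plasmaZ (ζ : ℂ) : ℂ :=
  (Real.sqrt (2 * Real.pi) : ℂ)⁻¹ *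
    ∫ v : ℝ, Complex.exp (-(v : ℂ) ^ 2 / 2) / ((v : ℂ) - ζ)

namespace PlasmaZAux

lemma im_le_norm (v : ℝ) (ζ : ℂ) : |ζ.im| ≤ ‖(v:ℂ) - ζ‖ := by
  have h : |((v:ℂ) - ζ).im| ≤ ‖(v:ℂ) - ζ‖ := Complex.abs_im_le_norm _
  simpa using h

lemma sub_ne (v : ℝ) {ζ : ℂ} (hζ : ζ.im ≠ 0) : (v:ℂ) - ζ ≠ 0 := by
  intro h
  apply hζ
  have := congrArg Complex.im h
  simpa using this.symm

lemma norm_exp' (v : ℝ) : ‖Complex.exp (-(v:ℂ)^2/2)‖ = Real.exp (-(1/2) * v^2) := by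
  rw [show -(v:ℂ)^2/2 = ((-(1/2) * v^2 : ℝ) : ℂ) by push_cast; ring]
  rw [Complex.norm_exp, Complex.ofReal_re]

end PlasmaZAux

namespace PlasmaZAux

lemma cont_F {ζ : ℂ} (hζ : ζ.im ≠ 0) :
    Continuous (fun v : ℝ => Complex.exp (-(v:ℂ)^2/2) / ((v:ℂ) - ζ)) := by
  apply Continuous.div
  · exact Complex.continuous_exp.comp (by continuity)
  · continuity
  · exact fun v => sub_ne v hζ

lemma integrable_F {ζ : ℂ} (hζ : ζ.im ≠ 0) :
    Integrable (fun v : ℝ => Complex.exp (-(v:ℂ)^2/2) / ((v:ℂ) - ζ)) := by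
  have hm : (0:ℝ) < |ζ.im| := abs_pos.mpr hζ
  refine Integrable.mono'
    ((integrable_exp_neg_mul_sq (by norm_num : (0:ℝ) < 1/2)).const_mul (|ζ.im|⁻¹))
    (cont_F hζ).aestronglyMeasurable (Filter.Eventually.of_forall fun v => ?_)
  rw [norm_div, norm_exp']
  rw [div_eq_mul_inv, mul_comm]
  gcongr
  exact im_le_norm v ζ

lemma integrable_F2 {ζ : ℂ} (hζ : ζ.im ≠ 0) :
    Integrable (fun v : ℝ => Complex.exp (-(v:ℂ)^2/2) / ((v:ℂ) - ζ)^2) := by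
  have hm : (0:ℝ) < |ζ.im| := abs_pos.mpr hζ
  refine Integrable.mono'
    ((integrable_exp_neg_mul_sq (by norm_num : (0:ℝ) < 1/2)).const_mul ((|ζ.im|^2)⁻¹))
    ?_ (Filter.Eventually.of_forall fun v => ?_)
  · refine (Continuous.div ?_ ?_ fun v => pow_ne_zero 2 (sub_ne v hζ)).aestronglyMeasurable
    · exact Complex.continuous_exp.comp (by continuity)
    · continuity
  · rw [norm_div, norm_exp', norm_pow]
    rw [div_eq_mul_inv, mul_comm]
    gcongr
    exact im_le_norm v ζ

lemma integrable_vF {ζ : ℂ} (hζ : ζ.im ≠ 0) :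
    Integrable (fun v : ℝ => (v:ℂ) * Complex.exp (-(v:ℂ)^2/2) / ((v:ℂ) - ζ)) := by
  have hm : (0:ℝ) < |ζ.im| := abs_pos.mpr hζ
  have hint : Integrable (fun v : ℝ => |ζ.im|⁻¹ * |v * Real.exp (-(1/2) * v^2)|) :=
    ((integrable_mul_exp_neg_mul_sq (by norm_num : (0:ℝ) < 1/2)).abs).const_mul _
  refine Integrable.mono' hint
    ?_ (Filter.Eventually.of_forall fun v => ?_)
  · refine (Continuous.div ?_ ?_ fun v => sub_ne v hζ).aestronglyMeasurable
    · exact Continuous.mul (by continuity) (Complex.continuous_exp.comp (by continuity))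
    · continuity
  · rw [norm_div, norm_mul, norm_exp', Complex.norm_real, Real.norm_eq_abs]
    rw [div_eq_mul_inv, mul_comm, abs_mul, abs_of_nonneg (Real.exp_nonneg _)]
    gcongr
    exact im_le_norm v ζ

end PlasmaZAux

namespace PlasmaZAux

lemma hasDerivAt_int {ζ : ℂ} (hζ : ζ.im ≠ 0) :
    HasDerivAt (fun z : ℂ => ∫ v : ℝ, Complex.exp (-(v:ℂ)^2/2) / ((v:ℂ) - z))
      (∫ v : ℝ, Complex.exp (-(v:ℂ)^2/2) / ((v:ℂ) - ζ)^2) ζ := by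
  have hm : (0:ℝ) < |ζ.im| := abs_pos.mpr hζ
  set ε := |ζ.im| / 2 with hε
  have εpos : 0 < ε := by positivity
  -- all z in the ball have |z.im| ≥ ε
  have hball : ∀ z ∈ Metric.ball ζ ε, ε ≤ |z.im| := by
    intro z hz
    rw [Metric.mem_ball, Complex.dist_eq] at hz
    have h1 : |ζ.im - z.im| ≤ ‖ζ - z‖ := by
      have := Complex.abs_im_le_norm (ζ - z); simpa using this
    have h2 : ‖ζ - z‖ < ε := by rwa [← Complex.dist_eq, dist_comm, Complex.dist_eq] at hz
    have := abs_sub_abs_le_abs_sub ζ.im z.im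
    have : |ζ.im| - |z.im| < ε := lt_of_le_of_lt (le_trans this h1) h2
    linarith
  have hne : ∀ z ∈ Metric.ball ζ ε, z.im ≠ 0 := by
    intro z hz h0
    have := hball z hz
    rw [h0] at this; simp at this; linarith
  have := hasDerivAt_integral_of_dominated_loc_of_deriv_le (μ := (volume : Measure ℝ))
    (F := fun (z : ℂ) (v : ℝ) => Complex.exp (-(v:ℂ)^2/2) / ((v:ℂ) - z))
    (F' := fun (z : ℂ) (v : ℝ) => Complex.exp (-(v:ℂ)^2/2) / ((v:ℂ) - z)^2)
    (x₀ := ζ) (bound := fun v => (ε^2)⁻¹ * Real.exp (-(1/2) * v^2)) (Metric.ball_mem_nhds ζ εpos)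
    ?_ (integrable_F hζ) ((integrable_F2 hζ)).aestronglyMeasurable ?_ ?_ ?_
  · exact this.2
  · filter_upwards [Metric.ball_mem_nhds ζ εpos] with z hz
    exact (cont_F (hne z hz)).aestronglyMeasurable
  · refine Filter.Eventually.of_forall fun v => fun z hz => ?_
    show _ ≤ (ε^2)⁻¹ * Real.exp (-(1/2) * v^2)
    rw [norm_div, norm_exp', div_eq_mul_inv, mul_comm ((ε^2)⁻¹) _]
    have hεz : ε ≤ ‖(v:ℂ) - z‖ := le_trans (hball z hz) (im_le_norm v z)
    refine mul_le_mul_of_nonneg_left ?_ (Real.exp_nonneg _)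
    rw [norm_pow]
    refine inv_anti₀ (by positivity) ?_
    calc ε^2 = ε * ε := sq ε
      _ ≤ ‖(v:ℂ) - z‖ * ‖(v:ℂ) - z‖ := mul_le_mul hεz hεz (le_of_lt εpos) (norm_nonneg _)
      _ = ‖(v:ℂ) - z‖^2 := (sq _).symm
  · exact (integrable_exp_neg_mul_sq (by norm_num : (0:ℝ) < 1/2)).const_mul _
  · refine Filter.Eventually.of_forall fun v => fun z hz => ?_
    have hvz : (v:ℂ) - z ≠ 0 := sub_ne v (hne z hz)
    have h1 : HasDerivAt (fun z : ℂ => (v:ℂ) - z) (-1) z := (hasDerivAt_id z).const_sub (v:ℂ)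
    have h2 := h1.inv hvz
    have h3 := h2.const_mul (Complex.exp (-(v:ℂ)^2/2))
    refine h3.congr_deriv ?_
    simp only [div_eq_mul_inv]
    ring

lemma g_hasDerivAt {ζ : ℂ} (hζ : ζ.im ≠ 0) (v : ℝ) :
    HasDerivAt (fun v : ℝ => -Complex.exp (-(v:ℂ)^2/2) * ((v:ℂ) - ζ)⁻¹)
      ((v:ℂ) * Complex.exp (-(v:ℂ)^2/2) / ((v:ℂ) - ζ) + Complex.exp (-(v:ℂ)^2/2) / ((v:ℂ) - ζ)^2)
      v := by
  have hvz : (v:ℂ) - ζ ≠ 0 := sub_ne v hζ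
  have h1 : HasDerivAt (fun z : ℂ => -z^2/2) (-(v:ℂ)) (v:ℂ) := by
    have := ((hasDerivAt_pow 2 ((v:ℂ))).neg).div_const 2
    refine this.congr_deriv ?_
    push_cast; ring
  have h2 : HasDerivAt (fun z : ℂ => Complex.exp (-z^2/2))
      (Complex.exp (-(v:ℂ)^2/2) * (-(v:ℂ))) (v:ℂ) := h1.cexp
  have h3 : HasDerivAt (fun z : ℂ => (z - ζ)⁻¹) (-1 / ((v:ℂ) - ζ)^2) (v:ℂ) := by
    have := ((hasDerivAt_id ((v:ℂ))).sub_const ζ).inv hvz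
    simp at this
    exact this
  have h4 := (h2.neg).mul h3
  have h5 := h4.comp_ofReal
  refine h5.congr_deriv ?_
  simp only [Pi.neg_apply]
  field_simp

lemma g_tendsto_zero {ζ : ℂ} (hζ : ζ.im ≠ 0) (l : Filter ℝ)
    (hl : Tendsto (fun v : ℝ => |v|) l atTop) :
    Tendsto (fun v : ℝ => -Complex.exp (-(v:ℂ)^2/2) * ((v:ℂ) - ζ)⁻¹) l (nhds 0) := by
  have hm : (0:ℝ) < |ζ.im| := abs_pos.mpr hζ
  apply squeeze_zero_norm (a := fun v : ℝ => |ζ.im|⁻¹ * Real.exp (-(1/2) * v^2))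
  · intro v
    rw [norm_mul, norm_neg, norm_exp', norm_inv, mul_comm]
    gcongr
    exact im_le_norm v ζ
  · have h1 : Tendsto (fun v : ℝ => -(1/2) * v^2) l atBot := by
      apply Tendsto.const_mul_atTop_of_neg (by norm_num : (-(1/2):ℝ) < 0)
      have : (fun v : ℝ => v^2) = fun v : ℝ => |v|^2 := by funext v; rw [sq_abs]
      rw [this]
      exact (tendsto_pow_atTop two_ne_zero).comp hl
    have := (Real.tendsto_exp_atBot.comp h1).const_mul (|ζ.im|⁻¹)
    simpa using this

lemma parts {ζ : ℂ} (hζ : ζ.im ≠ 0) :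
    ∫ v : ℝ, Complex.exp (-(v:ℂ)^2/2) / ((v:ℂ) - ζ)^2
      = - ∫ v : ℝ, (v:ℂ) * Complex.exp (-(v:ℂ)^2/2) / ((v:ℂ) - ζ) := by
  set g : ℝ → ℂ := fun v => -Complex.exp (-(v:ℂ)^2/2) * ((v:ℂ) - ζ)⁻¹ with hg
  set g' : ℝ → ℂ := fun v =>
    (v:ℂ) * Complex.exp (-(v:ℂ)^2/2) / ((v:ℂ) - ζ) + Complex.exp (-(v:ℂ)^2/2) / ((v:ℂ) - ζ)^2
    with hg'
  have hint : Integrable g' := (integrable_vF hζ).add (integrable_F2 hζ)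
  have htop : Tendsto g atTop (nhds 0) := g_tendsto_zero hζ atTop tendsto_abs_atTop_atTop
  have hbot : Tendsto g atBot (nhds 0) := g_tendsto_zero hζ atBot tendsto_abs_atBot_atTop
  have hIoi : ∫ v in Set.Ioi (0:ℝ), g' v = 0 - g 0 := by
    refine integral_Ioi_of_hasDerivAt_of_tendsto' (fun x _ => g_hasDerivAt hζ x)
      hint.integrableOn htop
  have hIic : ∫ v in Set.Iic (0:ℝ), g' v = g 0 - 0 := by
    refine integral_Iic_of_hasDerivAt_of_tendsto' (fun x _ => g_hasDerivAt hζ x)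
      hint.integrableOn hbot
  have hsum : ∫ v, g' v = 0 := by
    rw [← intervalIntegral.integral_Iic_add_Ioi hint.integrableOn hint.integrableOn, hIoi, hIic]
    ring
  have := integral_add (integrable_vF hζ) (integrable_F2 hζ)
  rw [hg'] at hsum
  rw [show (fun v : ℝ => (v:ℂ) * Complex.exp (-(v:ℂ)^2/2) / ((v:ℂ) - ζ)
      + Complex.exp (-(v:ℂ)^2/2) / ((v:ℂ) - ζ)^2) = fun v : ℝ =>
      ((fun v : ℝ => (v:ℂ) * Complex.exp (-(v:ℂ)^2/2) / ((v:ℂ) - ζ)) v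
      + (fun v : ℝ => Complex.exp (-(v:ℂ)^2/2) / ((v:ℂ) - ζ)^2) v) from rfl] at hsum
  rw [this] at hsum
  linear_combination hsum

end PlasmaZAux

namespace PlasmaZAux

lemma gauss_integral : (∫ v : ℝ, Complex.exp (-(v:ℂ)^2/2))
    = (Real.sqrt (2 * Real.pi) : ℂ) := by
  have h1 : ∀ v : ℝ, Complex.exp (-(v:ℂ)^2/2) = ((Real.exp (-(1/2) * v^2) : ℝ) : ℂ) := by
    intro v
    rw [Complex.ofReal_exp]
    congr 1
    push_cast; ring
  rw [show (fun v : ℝ => Complex.exp (-(v:ℂ)^2/2))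
      = fun v : ℝ => ((Real.exp (-(1/2) * v^2) : ℝ) : ℂ) from funext h1]
  have hcoe : ∫ v : ℝ, ((Real.exp (-(1/2) * v^2) : ℝ) : ℂ)
      = ((∫ v : ℝ, Real.exp (-(1/2) * v^2) : ℝ) : ℂ) := integral_ofReal
  rw [hcoe, integral_gaussian]
  norm_cast
  congr 1
  rw [div_div_eq_mul_div, div_one, mul_comm]

lemma vF_integral {ζ : ℂ} (hζ : ζ.im ≠ 0) :
    ∫ v : ℝ, (v:ℂ) * Complex.exp (-(v:ℂ)^2/2) / ((v:ℂ) - ζ)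
      = (Real.sqrt (2 * Real.pi) : ℂ) + ζ * ∫ v : ℝ, Complex.exp (-(v:ℂ)^2/2) / ((v:ℂ) - ζ) := by
  have hpt : ∀ v : ℝ, (v:ℂ) * Complex.exp (-(v:ℂ)^2/2) / ((v:ℂ) - ζ)
      = Complex.exp (-(v:ℂ)^2/2) + ζ * (Complex.exp (-(v:ℂ)^2/2) / ((v:ℂ) - ζ)) := by
    intro v
    have hvz : (v:ℂ) - ζ ≠ 0 := sub_ne v hζ
    field_simp
    ring
  rw [show (fun v : ℝ => (v:ℂ) * Complex.exp (-(v:ℂ)^2/2) / ((v:ℂ) - ζ))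
      = fun v : ℝ => Complex.exp (-(v:ℂ)^2/2) + ζ * (Complex.exp (-(v:ℂ)^2/2) / ((v:ℂ) - ζ))
      from funext hpt]
  have hgauss : Integrable (fun v : ℝ => Complex.exp (-(v:ℂ)^2/2)) := by
    have := integrable_cexp_neg_mul_sq (b := 1/2) (by norm_num)
    apply this.congr
    filter_upwards with v
    congr 1
    push_cast; ring
  rw [integral_add hgauss ((integrable_F hζ).const_mul ζ), integral_const_mul, gauss_integral]

end PlasmaZAux

open PlasmaZAux in
lemma plasmaZ_hasDerivAt {ζ : ℂ} (hζ : ζ.im ≠ 0) :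
    HasDerivAt plasmaZ (-1 - ζ * plasmaZ ζ) ζ := by
  have hs : (0:ℝ) < Real.sqrt (2 * Real.pi) := Real.sqrt_pos.mpr (by positivity)
  have hsc : (Real.sqrt (2 * Real.pi) : ℂ) ≠ 0 := by exact_mod_cast hs.ne'
  have h := (hasDerivAt_int hζ).const_mul ((Real.sqrt (2 * Real.pi) : ℂ))⁻¹
  have heq : ((Real.sqrt (2 * Real.pi) : ℂ))⁻¹ * ∫ v : ℝ, Complex.exp (-(v:ℂ)^2/2) / ((v:ℂ) - ζ)^2
      = -1 - ζ * plasmaZ ζ := by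
    rw [parts hζ, vF_integral hζ, plasmaZ]
    rw [mul_neg, mul_add, inv_mul_cancel₀ hsc]
    ring
  rw [heq] at h
  unfold plasmaZ
  exact h

/-- For every `n ≥ 1` there are integer polynomials `p_n`, `q_n` with
`Z⁽ⁿ⁾(ζ) = p_n(ζ) + q_n(ζ) Z(ζ)` on `ℂ \ ℝ`, and `q_n = (-1)ⁿ H_n`, `H_n` being the
`n`-th probabilists' Hermite polynomial. -/
theorem plasmaZ_iteratedDeriv (n : ℕ) (hn : 1 ≤ n) :
    ∃ p q : Polynomial ℤ,
      (∀ ζ : ℂ, ζ.im ≠ 0 →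
        iteratedDeriv n plasmaZ ζ =
          p.eval₂ (Int.castRingHom ℂ) ζ + q.eval₂ (Int.castRingHom ℂ) ζ * plasmaZ ζ) ∧
      q = (-1) ^ n * Polynomial.hermite n := by
  induction n, hn using Nat.le_induction with
  | base =>
    refine ⟨-1, -Polynomial.X, fun ζ hζ => ?_, by simp [Polynomial.hermite_one]⟩
    rw [iteratedDeriv_one, (plasmaZ_hasDerivAt hζ).deriv]
    simp only [Polynomial.eval₂_neg, Polynomial.eval₂_one, Polynomial.eval₂_X]
    ring
  | succ n hn ih =>
    obtain ⟨p, q, hpq, hq⟩ := ih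
    refine ⟨p.derivative - q, q.derivative - Polynomial.X * q, fun ζ hζ => ?_, ?_⟩
    · have hopen : IsOpen {z : ℂ | z.im ≠ 0} :=
        isOpen_compl_iff.mpr (isClosed_eq Complex.continuous_im continuous_const)
      have hmem : {z : ℂ | z.im ≠ 0} ∈ nhds ζ := hopen.mem_nhds hζ
      have hev : iteratedDeriv n plasmaZ =ᶠ[nhds ζ]
          fun z => (p.map (Int.castRingHom ℂ)).eval z
            + (q.map (Int.castRingHom ℂ)).eval z * plasmaZ z := by
        filter_upwards [hmem] with z hz
        rw [hpq z hz, Polynomial.eval_map, Polynomial.eval_map]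
      rw [iteratedDeriv_succ, hev.deriv_eq]
      set pc := p.map (Int.castRingHom ℂ) with hpc
      set qc := q.map (Int.castRingHom ℂ) with hqc
      have hder : HasDerivAt (fun z => pc.eval z + qc.eval z * plasmaZ z)
          (pc.derivative.eval ζ +
            (qc.derivative.eval ζ * plasmaZ ζ + qc.eval ζ * (-1 - ζ * plasmaZ ζ))) ζ :=
        (pc.hasDerivAt ζ).add ((qc.hasDerivAt ζ).mul (plasmaZ_hasDerivAt hζ))
      rw [hder.deriv]
      simp only [Polynomial.eval₂_eq_eval_map, Polynomial.map_sub, Polynomial.map_mul,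
        Polynomial.map_X, ← Polynomial.derivative_map, ← hpc, ← hqc,
        Polynomial.eval_sub, Polynomial.eval_mul, Polynomial.eval_X]
      ring
    · rw [hq, Polynomial.hermite_succ]
      have hC : ((-1 : Polynomial ℤ)^n) = Polynomial.C ((-1)^n) := by simp
      rw [hC, Polynomial.derivative_C_mul, ← hC, pow_succ]
      ring
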